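/- (Quantitative implicit function theorem.) Let j, m ≥ 1, v₀ ∈ ℝʲ, y₀ ∈ ℝᵐ, r₁, r₂ > 0, and let B₁ be the closed ball of radius r₁ centered at v₀ in ℝʲ and B₂ the closed ball of radius r₂ centered at y₀ in ℝᵐ. Let F be an ℝʲ-valued map defined on an open set O ⊆ ℝʲ × ℝᵐ with B₁ × B₂ ⊆ O, such that F and the partial derivative ∂F/∂v (the Fréchet derivative of v ↦ F(v,y)) exist and are continuous on B₁ × B₂. Assume: F(v₀,y₀) = 0; ∂F/∂v(v₀,y₀) is invertible with inverse T₀; sup_{y ∈ B₂} |F(v₀,y)| ≤ r₁/(2‖T₀‖); and sup_{(v,y) ∈ B₁×B₂} ‖I_j − T₀ ∘ (∂F/∂v)(v,y)‖ ≤ 1/2, where I_j is the identity on ℝʲ. Then there exists a unique continuous map q : B₂ → B₁ such that q(y₀) = v₀ and, for every (v,y) ∈ B₁ × B₂, F(v,y) = 0 if and only if v = q(y). -/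

import Mathlib

set_option maxHeartbeats 1000000
set_option synthInstance.maxHeartbeats 400000


open Metric

/-- Quantitative implicit function theorem. -/
theorem stmt2 (j m : ℕ) (hj : 1 ≤ j) (hm : 1 ≤ m)
    (v₀ : EuclideanSpace ℝ (Fin j)) (y₀ : EuclideanSpace ℝ (Fin m))
    (r₁ r₂ : ℝ) (hr₁ : 0 < r₁) (hr₂ : 0 < r₂)
    (O : Set (EuclideanSpace ℝ (Fin j) × EuclideanSpace ℝ (Fin m))) (hO : IsOpen O)
    (hsub : closedBall v₀ r₁ ×ˢ closedBall y₀ r₂ ⊆ O)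
    (F : EuclideanSpace ℝ (Fin j) × EuclideanSpace ℝ (Fin m) → EuclideanSpace ℝ (Fin j))
    (Dv : EuclideanSpace ℝ (Fin j) × EuclideanSpace ℝ (Fin m) →
      (EuclideanSpace ℝ (Fin j) →L[ℝ] EuclideanSpace ℝ (Fin j)))
    (hFcont : ContinuousOn F (closedBall v₀ r₁ ×ˢ closedBall y₀ r₂))
    (hDv : ∀ p ∈ closedBall v₀ r₁ ×ˢ closedBall y₀ r₂,
      HasFDerivAt (fun v => F (v, p.2)) (Dv p) p.1)
    (hDvcont : ContinuousOn Dv (closedBall v₀ r₁ ×ˢ closedBall y₀ r₂))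
    (hF0 : F (v₀, y₀) = 0)
    (T₀ : EuclideanSpace ℝ (Fin j) →L[ℝ] EuclideanSpace ℝ (Fin j))
    (hT₀l : T₀.comp (Dv (v₀, y₀)) = ContinuousLinearMap.id ℝ (EuclideanSpace ℝ (Fin j)))
    (hT₀r : (Dv (v₀, y₀)).comp T₀ = ContinuousLinearMap.id ℝ (EuclideanSpace ℝ (Fin j)))
    (hsmall : ∀ y ∈ closedBall y₀ r₂, ‖F (v₀, y)‖ ≤ r₁ / (2 * ‖T₀‖))
    (hhalf : ∀ p ∈ closedBall v₀ r₁ ×ˢ closedBall y₀ r₂,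
      ‖ContinuousLinearMap.id ℝ (EuclideanSpace ℝ (Fin j)) - T₀.comp (Dv p)‖ ≤ 1 / 2) :
    ∃ q : EuclideanSpace ℝ (Fin m) → EuclideanSpace ℝ (Fin j),
      (ContinuousOn q (closedBall y₀ r₂) ∧
        Set.MapsTo q (closedBall y₀ r₂) (closedBall v₀ r₁) ∧
        q y₀ = v₀ ∧
        ∀ v ∈ closedBall v₀ r₁, ∀ y ∈ closedBall y₀ r₂, (F (v, y) = 0 ↔ v = q y)) ∧
      ∀ q' : EuclideanSpace ℝ (Fin m) → EuclideanSpace ℝ (Fin j),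
        (ContinuousOn q' (closedBall y₀ r₂) ∧
          Set.MapsTo q' (closedBall y₀ r₂) (closedBall v₀ r₁) ∧
          q' y₀ = v₀ ∧
          ∀ v ∈ closedBall v₀ r₁, ∀ y ∈ closedBall y₀ r₂, (F (v, y) = 0 ↔ v = q' y)) →
        Set.EqOn q' q (closedBall y₀ r₂) := by
  classical
  -- a nonzero vector
  have hx₁ : (EuclideanSpace.single ⟨0, hj⟩ (1 : ℝ) : EuclideanSpace ℝ (Fin j)) ≠ 0 := by
    intro h
    have h1 : ‖(EuclideanSpace.single ⟨0, hj⟩ (1 : ℝ) : EuclideanSpace ℝ (Fin j))‖ = 0 := by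
      rw [h, norm_zero]
    rw [EuclideanSpace.norm_single] at h1
    norm_num at h1
  -- T₀ is injective
  have hT₀inj : ∀ x : EuclideanSpace ℝ (Fin j), T₀ x = 0 → x = 0 := by
    intro x hx
    have h := ContinuousLinearMap.ext_iff.mp hT₀r x
    simp only [ContinuousLinearMap.comp_apply, ContinuousLinearMap.id_apply] at h
    rw [hx] at h
    simpa using h.symm
  -- ‖T₀‖ > 0
  have hT₀ne : T₀ ≠ 0 := by
    intro h
    have h1 := ContinuousLinearMap.ext_iff.mp hT₀l (EuclideanSpace.single ⟨0, hj⟩ (1 : ℝ))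
    simp only [ContinuousLinearMap.comp_apply, ContinuousLinearMap.id_apply, h,
      ContinuousLinearMap.zero_apply] at h1
    exact hx₁ h1.symm
  have hT₀pos : 0 < ‖T₀‖ := norm_pos_iff.mpr hT₀ne
  -- contraction estimate
  have hderiv : ∀ y ∈ closedBall y₀ r₂, ∀ v ∈ closedBall v₀ r₁,
      HasFDerivWithinAt (fun v => v - T₀ (F (v, y)))
        (ContinuousLinearMap.id ℝ (EuclideanSpace ℝ (Fin j)) - T₀.comp (Dv (v, y)))
        (closedBall v₀ r₁) v := by
    intro y hy v hv
    have h1 : HasFDerivAt (fun v => F (v, y)) (Dv (v, y)) v := hDv (v, y) ⟨hv, hy⟩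
    have h2 : HasFDerivAt (fun v : EuclideanSpace ℝ (Fin j) => T₀ (F (v, y)))
        (T₀.comp (Dv (v, y))) v := T₀.hasFDerivAt.comp v h1
    exact ((hasFDerivAt_id v).sub h2).hasFDerivWithinAt
  have hlip : ∀ y ∈ closedBall y₀ r₂, ∀ v ∈ closedBall v₀ r₁, ∀ w ∈ closedBall v₀ r₁,
      ‖(v - T₀ (F (v, y))) - (w - T₀ (F (w, y)))‖ ≤ (1 / 2) * ‖v - w‖ := by
    intro y hy v hv w hw
    exact (convex_closedBall v₀ r₁).norm_image_sub_le_of_norm_hasFDerivWithin_le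
      (fun x hx => hderiv y hy x hx) (fun x hx => hhalf (x, y) ⟨hx, hy⟩) hw hv
  -- the iteration maps B1 into itself
  have hmaps : ∀ y ∈ closedBall y₀ r₂, ∀ v ∈ closedBall v₀ r₁,
      v - T₀ (F (v, y)) ∈ closedBall v₀ r₁ := by
    intro y hy v hv
    rw [mem_closedBall, dist_eq_norm]
    have h1 := hlip y hy v hv v₀ (mem_closedBall_self hr₁.le)
    have h2 : ‖T₀ (F (v₀, y))‖ ≤ r₁ / 2 := by
      calc ‖T₀ (F (v₀, y))‖ ≤ ‖T₀‖ * ‖F (v₀, y)‖ := T₀.le_opNorm _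
        _ ≤ ‖T₀‖ * (r₁ / (2 * ‖T₀‖)) := mul_le_mul_of_nonneg_left (hsmall y hy) hT₀pos.le
        _ = r₁ / 2 := by field_simp
    have h3 : ‖v - v₀‖ ≤ r₁ := by
      rw [← dist_eq_norm]; exact mem_closedBall.mp hv
    have h4 : ‖v - T₀ (F (v, y)) - v₀‖
        ≤ ‖(v - T₀ (F (v, y))) - (v₀ - T₀ (F (v₀, y)))‖ + ‖T₀ (F (v₀, y))‖ := by
      have he : v - T₀ (F (v, y)) - v₀ =
          ((v - T₀ (F (v, y))) - (v₀ - T₀ (F (v₀, y)))) + (- T₀ (F (v₀, y))) := by abel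
      rw [he]
      have := norm_add_le ((v - T₀ (F (v, y))) - (v₀ - T₀ (F (v₀, y)))) (- T₀ (F (v₀, y)))
      rwa [norm_neg] at this
    linarith
  -- existence of fixed point
  have hex : ∀ y, y ∈ closedBall y₀ r₂ →
      ∃ v, v ∈ closedBall v₀ r₁ ∧ v - T₀ (F (v, y)) = v := by
    intro y hy
    haveI : Nonempty (closedBall v₀ r₁) := ⟨⟨v₀, mem_closedBall_self hr₁.le⟩⟩
    haveI : CompleteSpace (closedBall v₀ r₁) := IsClosed.completeSpace_coe (hs := isClosed_closedBall)
    set g : closedBall v₀ r₁ → closedBall v₀ r₁ :=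
      fun x => ⟨x.1 - T₀ (F (x.1, y)), hmaps y hy x.1 x.2⟩ with hg
    have hcg : ContractingWith (1 / 2 : NNReal) g := by
      refine ⟨?_, ?_⟩
      · rw [← NNReal.coe_lt_coe]; norm_num
      · apply LipschitzWith.of_dist_le_mul
        intro a b
        have h1 := hlip y hy a.1 a.2 b.1 b.2
        have hd : dist (g a) (g b)
            = ‖(a.1 - T₀ (F (a.1, y))) - (b.1 - T₀ (F (b.1, y)))‖ := by
          rw [Subtype.dist_eq, dist_eq_norm]
        have hd2 : dist a b = ‖a.1 - b.1‖ := by rw [Subtype.dist_eq, dist_eq_norm]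
        have hc : ((1 / 2 : NNReal) : ℝ) = 1 / 2 := by norm_num
        rw [hd, hd2, hc]
        exact h1
    refine ⟨(hcg.fixedPoint g).1, (hcg.fixedPoint g).2, ?_⟩
    exact congrArg Subtype.val hcg.fixedPoint_isFixedPt
  -- uniqueness of fixed point
  have huniq : ∀ y ∈ closedBall y₀ r₂, ∀ v ∈ closedBall v₀ r₁, ∀ w ∈ closedBall v₀ r₁,
      v - T₀ (F (v, y)) = v → w - T₀ (F (w, y)) = w → v = w := by
    intro y hy v hv w hw h1 h2
    have h3 := hlip y hy v hv w hw
    rw [h1, h2] at h3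
    have h4 : ‖v - w‖ = 0 := le_antisymm (by linarith) (norm_nonneg _)
    exact eq_of_sub_eq_zero (norm_eq_zero.mp h4)
  -- fixed point ↔ zero of F
  have hfixiff : ∀ y, ∀ v : EuclideanSpace ℝ (Fin j),
      (v - T₀ (F (v, y)) = v ↔ F (v, y) = 0) := by
    intro y v
    rw [sub_eq_self]
    exact ⟨hT₀inj _, fun h => by rw [h, map_zero]⟩
  choose! q hq1 hq2 using hex
  have hz : ∀ y ∈ closedBall y₀ r₂, T₀ (F (q y, y)) = 0 :=
    fun y hy => sub_eq_self.mp (hq2 y hy)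
  have hqzero : ∀ y ∈ closedBall y₀ r₂, F (q y, y) = 0 :=
    fun y hy => (hfixiff y (q y)).mp (hq2 y hy)
  -- the iff characterization
  have hiff : ∀ v ∈ closedBall v₀ r₁, ∀ y ∈ closedBall y₀ r₂,
      (F (v, y) = 0 ↔ v = q y) := by
    intro v hv y hy
    constructor
    · intro h
      exact huniq y hy v hv (q y) (hq1 y hy) ((hfixiff y v).mpr h) (hq2 y hy)
    · intro h; rw [h]; exact hqzero y hy
  have hqy₀ : q y₀ = v₀ :=
    ((hiff v₀ (mem_closedBall_self hr₁.le) y₀ (mem_closedBall_self hr₂.le)).mp hF0).symm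
  -- key continuity estimate
  have key : ∀ y' ∈ closedBall y₀ r₂, ∀ y ∈ closedBall y₀ r₂,
      ‖q y - q y'‖ ≤ 2 * ‖T₀‖ * ‖F (q y', y) - F (q y', y')‖ := by
    intro y' hy' y hy
    have h3 := hlip y hy (q y) (hq1 y hy) (q y') (hq1 y' hy')
    rw [hz y hy, sub_zero] at h3
    have h4 : ‖q y - q y'‖ ≤ ‖q y - (q y' - T₀ (F (q y', y)))‖ + ‖T₀ (F (q y', y))‖ := by
      have he : q y - q y' = (q y - (q y' - T₀ (F (q y', y)))) + (- T₀ (F (q y', y))) := by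
        abel
      rw [he]
      have := norm_add_le (q y - (q y' - T₀ (F (q y', y)))) (- T₀ (F (q y', y)))
      rwa [norm_neg] at this
    have h5 : ‖T₀ (F (q y', y))‖ ≤ ‖T₀‖ * ‖F (q y', y) - F (q y', y')‖ := by
      have he : T₀ (F (q y', y)) = T₀ (F (q y', y) - F (q y', y')) := by
        rw [map_sub, hz y' hy', sub_zero]
      rw [he]
      exact T₀.le_opNorm _
    linarith
  -- continuity of q
  have hcont : ContinuousOn q (closedBall y₀ r₂) := by
    intro y' hy'
    have hFc : ContinuousWithinAt (fun y => F (q y', y)) (closedBall y₀ r₂) y' := by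
      have h0 : ContinuousWithinAt F (closedBall v₀ r₁ ×ˢ closedBall y₀ r₂) (q y', y') :=
        hFcont _ ⟨hq1 y' hy', hy'⟩
      have h1 : ContinuousWithinAt
          (fun y : EuclideanSpace ℝ (Fin m) => (q y', y)) (closedBall y₀ r₂) y' :=
        (continuous_const.prodMk continuous_id).continuousWithinAt
      exact h0.comp h1 (fun y hy => ⟨hq1 y' hy', hy⟩)
    have hg0 : Filter.Tendsto (fun y => 2 * ‖T₀‖ * ‖F (q y', y) - F (q y', y')‖)
        (nhdsWithin y' (closedBall y₀ r₂)) (nhds 0) := by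
      have h2 : Filter.Tendsto (fun y => ‖F (q y', y) - F (q y', y')‖)
          (nhdsWithin y' (closedBall y₀ r₂)) (nhds 0) := by
        have h2' : ContinuousWithinAt (fun y => F (q y', y) - F (q y', y'))
            (closedBall y₀ r₂) y' := hFc.sub continuousWithinAt_const
        have h3 : Filter.Tendsto (fun y => ‖F (q y', y) - F (q y', y')‖)
            (nhdsWithin y' (closedBall y₀ r₂)) (nhds ‖F (q y', y') - F (q y', y')‖) :=
          h2'.norm
        simpa using h3
      have := h2.const_mul (2 * ‖T₀‖)
      simpa using this
    have hq0 : Filter.Tendsto (fun y => ‖q y - q y'‖)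
        (nhdsWithin y' (closedBall y₀ r₂)) (nhds 0) := by
      apply squeeze_zero'
      · exact Filter.Eventually.of_forall fun y => norm_nonneg _
      · filter_upwards [self_mem_nhdsWithin] with y hy
        exact key y' hy' y hy
      · exact hg0
    exact tendsto_iff_norm_sub_tendsto_zero.mpr hq0
  refine ⟨q, ⟨hcont, fun y hy => hq1 y hy, hqy₀, hiff⟩, ?_⟩
  rintro q' ⟨-, hmap', -, hiff'⟩ y hy
  have h1 : F (q' y, y) = 0 := (hiff' (q' y) (hmap' hy) y hy).mpr rfl
  exact (hiff (q' y) (hmap' hy) y hy).mp h1
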